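/- Let B be an index type and a : B → ℝ, b : B → ℝ ∪ {+∞} satisfy a_i < b_i for all i ∈ B, and suppose there is s₀ ∈ ℝ with a_i ≥ s₀ for all i. Assume that for all real numbers t' < t the set {i ∈ B : a_i < t' and t ≤ b_i} is finite (q-tameness in the interval-decomposed model, since this set's cardinality is the rank of the structure map π_{t',t}). Then for every ε > 0 and every s ∈ ℝ, the set {i ∈ B : a_i < s and b_i − a_i > ε} is finite; that is, the number b_ε(s) of bars of length greater than ε beginning below s is finite. -/
import Mathlib

theorem aux_lt_sub {x ε : ℝ} {y : EReal} (h : (ε : EReal) < y - (x : EReal)) :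
    ((x + ε : ℝ) : EReal) < y := by
  have := EReal.add_lt_of_lt_sub h
  rw [EReal.coe_add]
  rw [add_comm]
  exact this

/-- For a family of bars `(a i, b i]` with starting points bounded below,
if for all `t' < t` the set of bars containing the segment `[t', t]` (whose cardinality
is the rank of the structure map `π_{t',t}` of the interval-decomposed persistence
module, so this is q-tameness) is finite, then for every `ε > 0` and `s ∈ ℝ` the set of
bars of length greater than `ε` beginning below `s` is finite. -/
theorem stmt_1 {B : Type*} (a : B → ℝ) (b : B → EReal)
    (hab : ∀ i, (a i : EReal) < b i)
    (s₀ : ℝ) (hlb : ∀ i, s₀ ≤ a i)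
    (htame : ∀ t' t : ℝ, t' < t → {i : B | a i < t' ∧ (t : EReal) ≤ b i}.Finite) :
    ∀ ε > (0 : ℝ), ∀ s : ℝ,
      {i : B | a i < s ∧ (ε : EReal) < b i - (a i : EReal)}.Finite := by
  intro ε hε s
  have hε2 : (0:ℝ) < ε / 2 := by linarith
  obtain ⟨N, hN⟩ := Archimedean.arch (s - s₀) hε2
  have hsub : {i : B | a i < s ∧ (ε : EReal) < b i - (a i : EReal)} ⊆
      ⋃ k ∈ Finset.range N,
        {i : B | a i < s₀ + (k + 1) * (ε / 2) ∧
          ((s₀ + k * (ε / 2) + ε : ℝ) : EReal) ≤ b i} := by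
    intro i ⟨his, hib⟩
    have h0 : 0 ≤ a i - s₀ := by linarith [hlb i]
    set k : ℕ := ⌊(a i - s₀) / (ε / 2)⌋₊ with hk
    have hk1 : (k : ℝ) ≤ (a i - s₀) / (ε / 2) := Nat.floor_le (by positivity)
    have hk2 : (a i - s₀) / (ε / 2) < k + 1 := Nat.lt_floor_add_one _
    have hlo : s₀ + k * (ε / 2) ≤ a i := by
      have := (le_div_iff₀ hε2).mp hk1
      linarith
    have hhi : a i < s₀ + (k + 1) * (ε / 2) := by
      have := (div_lt_iff₀ hε2).mp hk2
      linarith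
    have hkN : k < N := by
      by_contra h
      push_neg at h
      have : (N : ℝ) * (ε/2) ≤ (k:ℝ) * (ε/2) := by
        exact mul_le_mul_of_nonneg_right (by exact_mod_cast h) hε2.le
      simp only [nsmul_eq_mul] at hN
      linarith
    refine Set.mem_biUnion (Finset.mem_range.mpr hkN) ?_
    refine ⟨hhi, ?_⟩
    have h1 : ((s₀ + k * (ε / 2) + ε : ℝ) : EReal) ≤ ((a i + ε : ℝ) : EReal) := by
      exact_mod_cast (by linarith : s₀ + k * (ε / 2) + ε ≤ a i + ε)
    exact h1.trans (aux_lt_sub hib).le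
  refine Set.Finite.subset ?_ hsub
  apply Set.Finite.biUnion (Finset.range N).finite_toSet
  intro k _
  exact htame _ _ (by push_cast; linarith)
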